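/- In the setting of the block completion with $O^c = (A\times C)\cup(C\times A)$: for every $i \in A\cup C$, the maximum-determinant completion satisfies $\tilde\Theta_{ii} \leq \Theta_{ii}$, with strict inequality for $i \in A$ if and only if the row $\Theta_{iC}$ is nonzero, and for $j \in C$ if and only if the column $\Theta_{Aj}$ is nonzero. -/

import Mathlib

open Matrix

lemma posDef_submatrix_finset {p : ℕ} {Θ : Matrix (Fin p) (Fin p) ℝ} (hΘ : Θ.PosDef)
    (C : Finset (Fin p)) :
    (Θ.submatrix (fun k : {x // x ∈ C} => (k : Fin p))
      (fun k : {x // x ∈ C} => (k : Fin p))).PosDef := by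
  classical
  refine Matrix.PosDef.of_dotProduct_mulVec_pos ?_ ?_
  · exact hΘ.isHermitian.submatrix _
  · intro x hx
    set y : Fin p → ℝ := fun j => if h : j ∈ C then x ⟨j, h⟩ else 0 with hy
    have hy0 : y ≠ 0 := by
      intro h
      apply hx
      funext n
      have := congrFun h (↑n)
      simpa [hy, n.2] using this
    have hpos := hΘ.dotProduct_mulVec_pos hy0
    have hyy : ∀ n : {x // x ∈ C}, y ↑n = x n := fun n => by simp [hy, n.2]
    have key : star y ⬝ᵥ Θ *ᵥ y =
        star x ⬝ᵥ (Θ.submatrix (fun k : {x // x ∈ C} => (k : Fin p))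
          (fun k : {x // x ∈ C} => (k : Fin p))) *ᵥ x := by
      simp only [dotProduct, Matrix.mulVec, dotProduct, Matrix.submatrix_apply, star_trivial]
      rw [← Finset.sum_subset (Finset.subset_univ C)
        (fun j _ hj => by simp [hy, hj]), ← Finset.sum_coe_sort]
      refine Finset.sum_congr rfl fun n _ => ?_
      rw [hyy]
      congr 1
      rw [← Finset.sum_subset (Finset.subset_univ C)
        (fun k _ hk => by simp [hy, hk]), ← Finset.sum_coe_sort]
      exact Finset.sum_congr rfl fun m _ => by rw [hyy]
    rw [key] at hpos
    exact hpos

lemma aux_side {p : ℕ} {Θ Θ' : Matrix (Fin p) (Fin p) ℝ}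
    (hΘ : Θ.PosDef) (hΘ' : Θ'.PosDef) (A C : Finset (Fin p))
    (hagree : ∀ i j : Fin p, ¬((i ∈ A ∧ j ∈ C) ∨ (i ∈ C ∧ j ∈ A)) →
      Θ'⁻¹ i j = Θ⁻¹ i j)
    (i : Fin p) (hrow : ∀ k ∈ C, Θ' i k = 0) :
    Θ' i i ≤ Θ i i ∧ (Θ' i i < Θ i i ↔ ∃ j ∈ C, Θ i j ≠ 0) := by
  classical
  set E := Θ'⁻¹ - Θ⁻¹ with hEdef
  have hsym : ∀ a b, Θ a b = Θ b a := fun a b => by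
    have := hΘ.isHermitian.apply a b
    simpa using this.symm
  have hE : ∀ k l, ¬((k ∈ A ∧ l ∈ C) ∨ (k ∈ C ∧ l ∈ A)) → E k l = 0 := by
    intro k l h
    simp [hEdef, Matrix.sub_apply, hagree k l h]
  have hz : ∀ k l : Fin p, (k ∉ A ∨ l ∉ C) → Θ' i k * E k l = 0 := by
    intro k l h
    by_cases hkC : k ∈ C
    · rw [hrow k hkC, zero_mul]
    · rw [hE k l, mul_zero]
      rintro (⟨hkA, hlC⟩ | ⟨hkC', _⟩)
      · tauto
      · exact hkC hkC'
  have hid : Θ - Θ' = Θ' * E * Θ := by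
    have h1 : Θ' * Θ'⁻¹ = 1 := Matrix.mul_nonsing_inv _ hΘ'.det_pos.ne'.isUnit
    have h2 : Θ⁻¹ * Θ = 1 := Matrix.nonsing_inv_mul _ hΘ.det_pos.ne'.isUnit
    rw [hEdef, Matrix.mul_sub, Matrix.sub_mul, h1, Matrix.one_mul, Matrix.mul_assoc,
      h2, Matrix.mul_one]
  have key : ∀ j, Θ i j - Θ' i j = ∑ l ∈ C, (∑ k ∈ A, Θ' i k * E k l) * Θ l j := by
    intro j
    have h0 : Θ i j - Θ' i j = ∑ l, (∑ k, Θ' i k * E k l) * Θ l j := by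
      have h := congrFun (congrFun hid i) j
      simp only [Matrix.sub_apply, Matrix.mul_apply] at h
      rw [h]
    have houter : ∑ l, (∑ k, Θ' i k * E k l) * Θ l j
        = ∑ l ∈ C, (∑ k, Θ' i k * E k l) * Θ l j :=
      (Finset.sum_subset (Finset.subset_univ C) fun l _ hl => by
        rw [Finset.sum_eq_zero fun k _ => hz k l (Or.inr hl), zero_mul]).symm
    rw [h0, houter]
    exact Finset.sum_congr rfl fun l hl => by
      rw [Finset.sum_subset (Finset.subset_univ A) fun k _ hk => hz k l (Or.inl hk)]
  set u : {x // x ∈ C} → ℝ := fun n => ∑ k ∈ A, Θ' i k * E k ↑n with hu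
  set v : {x // x ∈ C} → ℝ := fun n => Θ ↑n i with hv
  set M := Θ.submatrix (fun k : {x // x ∈ C} => (k : Fin p))
      (fun k : {x // x ∈ C} => (k : Fin p)) with hM
  have hMpd := posDef_submatrix_finset hΘ C
  have key2 : ∀ j, Θ i j - Θ' i j = ∑ n : {x // x ∈ C}, u n * Θ ↑n j := by
    intro j
    rw [key j, ← Finset.sum_coe_sort]
  have hMv : M *ᵥ u = v := by
    funext l
    have h := key2 (↑l)
    rw [hrow _ l.2, sub_zero] at h
    have : (M *ᵥ u) l = ∑ n, u n * Θ ↑n ↑l := by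
      simp only [Matrix.mulVec, dotProduct, hM, Matrix.submatrix_apply]
      exact Finset.sum_congr rfl fun n _ => by rw [mul_comm, hsym]
    rw [this, ← h, hv]
    exact (hsym _ _).symm
  have hdiag : Θ i i - Θ' i i = u ⬝ᵥ v := by
    rw [key2 i]
    rfl
  have hpos : u ≠ 0 → 0 < u ⬝ᵥ v := by
    intro hu0
    have h := hMpd.dotProduct_mulVec_pos hu0
    rwa [star_trivial, hMv] at h
  have hv0 : u = 0 → v = 0 := fun h => by rw [← hMv, h, Matrix.mulVec_zero]
  have hiff : (∃ j ∈ C, Θ i j ≠ 0) ↔ u ≠ 0 := by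
    constructor
    · rintro ⟨j, hj, hΘj⟩ h
      apply hΘj
      have hvj : v ⟨j, hj⟩ = 0 := by rw [hv0 h]; rfl
      rw [hv] at hvj
      rw [hsym i j]
      exact hvj
    · intro hu0
      have hvne : v ≠ 0 := by
        intro hveq
        have := hpos hu0
        rw [hveq, dotProduct_zero] at this
        exact lt_irrefl _ this
      obtain ⟨n, hn⟩ := Function.ne_iff.mp hvne
      exact ⟨↑n, n.2, by rw [hsym i ↑n]; exact hn⟩
  constructor
  · by_cases hu0 : u = 0
    · have : Θ i i - Θ' i i = 0 := by rw [hdiag, hu0, zero_dotProduct]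
      linarith
    · have := hpos hu0
      rw [← hdiag] at this
      linarith
  · constructor
    · intro hlt
      apply hiff.mpr
      intro hu0
      have : Θ i i - Θ' i i = 0 := by rw [hdiag, hu0, zero_dotProduct]
      linarith
    · intro hex
      have := hpos (hiff.mp hex)
      rw [← hdiag] at this
      linarith

/-- In the block completion setting with
`O^c = (A×C) ∪ (C×A)`: the maximum-determinant completion `Θ'` satisfies
`Θ'_{ii} ≤ Θ_{ii}` for all `i ∈ A ∪ C`, with strict inequality for `i ∈ A` iff the
row `Θ_{iC}` is nonzero, and for `j ∈ C` iff the column `Θ_{Aj}` is nonzero. -/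
theorem madgq_diag_distortion (p : ℕ) (Θ Θ' : Matrix (Fin p) (Fin p) ℝ)
    (hΘ : Θ.PosDef) (hΘ' : Θ'.PosDef) (A B C : Finset (Fin p))
    (hAB : Disjoint A B) (hAC : Disjoint A C) (hBC : Disjoint B C)
    (hcover : A ∪ B ∪ C = Finset.univ)
    (hz1 : ∀ i ∈ A, ∀ j ∈ C, Θ' i j = 0)
    (hz2 : ∀ i ∈ C, ∀ j ∈ A, Θ' i j = 0)
    (hagree : ∀ i j : Fin p, ¬((i ∈ A ∧ j ∈ C) ∨ (i ∈ C ∧ j ∈ A)) →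
      Θ'⁻¹ i j = Θ⁻¹ i j) :
    (∀ i ∈ A ∪ C, Θ' i i ≤ Θ i i) ∧
    (∀ i ∈ A, (Θ' i i < Θ i i ↔ ∃ j ∈ C, Θ i j ≠ 0)) ∧
    (∀ j ∈ C, (Θ' j j < Θ j j ↔ ∃ i ∈ A, Θ i j ≠ 0)) := by
  have hsym : ∀ a b, Θ a b = Θ b a := fun a b => by
    have := hΘ.isHermitian.apply a b
    simpa using this.symm
  have hagree' : ∀ i j : Fin p, ¬((i ∈ C ∧ j ∈ A) ∨ (i ∈ A ∧ j ∈ C)) →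
      Θ'⁻¹ i j = Θ⁻¹ i j := fun i j h => hagree i j (by tauto)
  have hA : ∀ i ∈ A, Θ' i i ≤ Θ i i ∧ (Θ' i i < Θ i i ↔ ∃ j ∈ C, Θ i j ≠ 0) :=
    fun i hi => aux_side hΘ hΘ' A C hagree i (fun k hk => hz1 i hi k hk)
  have hC : ∀ j ∈ C, Θ' j j ≤ Θ j j ∧ (Θ' j j < Θ j j ↔ ∃ i ∈ A, Θ j i ≠ 0) :=
    fun j hj => aux_side hΘ hΘ' C A hagree' j (fun k hk => hz2 j hj k hk)
  refine ⟨?_, ?_, ?_⟩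
  · intro i hi
    rcases Finset.mem_union.mp hi with h | h
    · exact (hA i h).1
    · exact (hC i h).1
  · exact fun i hi => (hA i hi).2
  · intro j hj
    rw [(hC j hj).2]
    constructor
    · rintro ⟨i, hi, hne⟩
      exact ⟨i, hi, by rwa [hsym i j]⟩
    · rintro ⟨i, hi, hne⟩
      exact ⟨i, hi, by rwa [hsym j i]⟩
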